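/- arXiv:2104.08950 — 2 statements merged into one kernel-verified Lean document; each statement's English description precedes it below -/
import Mathlib

section
/- Suppose c₁, …, c_m are formal power series over X = {x₀, x₁} with relative degrees r₁, …, r_m. If for every value r appearing among the rᵢ with multiplicity greater than one, the sum of the coefficients ⟨c_k, x₀^{r-1}x₁⟩ over all indices k with r_k = r is nonzero, then c₁ + ⋯ + c_m has relative degree min_i r_i. -/
/-- Words over the alphabet `X = {x₀, x₁}`, with `0 ↦ x₀` and `1 ↦ x₁`. -/
abbrev Word := List (Fin 2)

/-- A formal power series `c ∈ ℝ⟨⟨X⟩⟩` is a coefficient map `X* → ℝ`. -/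
abbrev Series := Word → ℝ

/-- `c` has relative degree `r ≥ 1`: the coefficient of `x₀^{r-1}x₁` is nonzero and
every word in the support of `c` containing the letter `x₁` has the form
`x₀^k x₁ η'` with `k ≥ r-1`.  (Equivalent to the decomposition
`c = c_N + K x₀^{r-1}x₁ + x₀^{r-1}e` with `K ≠ 0`, `e` proper, `x₁ ∉ supp e`.) -/
def HasRelDeg (c : Series) (r : ℕ) : Prop :=
  1 ≤ r ∧ c (List.replicate (r - 1) 0 ++ [1]) ≠ 0 ∧
    ∀ η : Word, c η ≠ 0 → (1 : Fin 2) ∈ η →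
      ∃ (k : ℕ) (η' : Word), r - 1 ≤ k ∧ η = List.replicate k 0 ++ 1 :: η'

private lemma rep_eq : ∀ (a b : ℕ) (u v : Word),
    List.replicate a (0:Fin 2) ++ 1 :: u = List.replicate b 0 ++ 1 :: v → a = b := by
  intro a
  induction a with
  | zero =>
    intro b u v h
    cases b with
    | zero => rfl
    | succ b => simp [List.replicate_succ] at h
  | succ a ih =>
    intro b u v h
    cases b with
    | zero => simp [List.replicate_succ] at h
    | succ b =>
      simp only [List.replicate_succ, List.cons_append, List.cons.injEq] at h
      exact congrArg Nat.succ (ih b u v h.2)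

/-- If `c₁, …, c_m` have relative degrees `r₁, …, r_m` and, for every value `ρ`
occurring among the `rᵢ` with multiplicity greater than one, the sum of the
coefficients `⟨c_k, x₀^{ρ-1}x₁⟩` over all `k` with `r_k = ρ` is nonzero, then
`c₁ + ⋯ + c_m` has relative degree `min_i r_i`. -/
theorem relDeg_sum_of_multiplicities (m : ℕ) (hm : 0 < m)
    (c : Fin m → Series) (r : Fin m → ℕ)
    (hc : ∀ i, HasRelDeg (c i) (r i))
    (hsum : ∀ ρ : ℕ, 1 < (Finset.univ.filter fun i => r i = ρ).card →
      ∑ i ∈ Finset.univ.filter (fun i => r i = ρ),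
        c i (List.replicate (ρ - 1) 0 ++ [1]) ≠ 0) :
    HasRelDeg (∑ i, c i) (Finset.univ.inf' ⟨⟨0, hm⟩, Finset.mem_univ _⟩ r) := by
  set ρ := Finset.univ.inf' ⟨⟨0, hm⟩, Finset.mem_univ _⟩ r with hρdef
  obtain ⟨i₀, -, hi₀⟩ := Finset.exists_mem_eq_inf' ⟨⟨0, hm⟩, Finset.mem_univ _⟩ r
  have hle : ∀ i, ρ ≤ r i := fun i => Finset.inf'_le _ (Finset.mem_univ i)
  have hρ1 : 1 ≤ ρ := by rw [← hρdef] at hi₀; rw [hi₀]; exact (hc i₀).1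
  set w : Word := List.replicate (ρ - 1) 0 ++ [1] with hw
  have h1w : (1 : Fin 2) ∈ w := by simp [hw]
  have hvanish : ∀ i, r i ≠ ρ → c i w = 0 := by
    intro i hi
    by_contra h
    obtain ⟨k, η', hk, heq⟩ := (hc i).2.2 w h h1w
    have hkeq : ρ - 1 = k := rep_eq _ _ [] η' heq
    have h1i : 1 ≤ r i := (hc i).1
    have := hle i
    omega
  have hsum_eq : (∑ i, c i) w = ∑ i ∈ Finset.univ.filter (fun i => r i = ρ), c i w := by
    rw [Finset.sum_apply]
    exact (Finset.sum_filter_of_ne (fun i _ h => by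
      by_contra hne; exact h (hvanish i hne))).symm
  have hne : (∑ i, c i) w ≠ 0 := by
    rw [hsum_eq]
    have hmem : i₀ ∈ Finset.univ.filter (fun i => r i = ρ) := by
      simp [← hρdef] at hi₀ ⊢; omega
    have hcard1 : 1 ≤ (Finset.univ.filter fun i => r i = ρ).card :=
      Finset.card_pos.mpr ⟨i₀, hmem⟩
    rcases eq_or_lt_of_le hcard1 with hcard | hcard
    · obtain ⟨a, ha⟩ := Finset.card_eq_one.mp hcard.symm
      have hra : r a = ρ := by
        have : a ∈ Finset.univ.filter (fun i => r i = ρ) := ha ▸ Finset.mem_singleton_self a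
        simpa using this
      rw [ha, Finset.sum_singleton, hw, ← hra]
      exact (hc a).2.1
    · exact hsum ρ hcard
  refine ⟨hρ1, hne, ?_⟩
  intro η hη h1
  have : ∃ i, c i η ≠ 0 := by
    by_contra h
    push_neg at h
    apply hη
    rw [Finset.sum_apply]
    exact Finset.sum_eq_zero fun i _ => h i
  obtain ⟨i, hi⟩ := this
  obtain ⟨k, η', hk, heq⟩ := (hc i).2.2 η hi h1
  exact ⟨k, η', by have := hle i; omega, heq⟩
end

section
/- For the shuffle product on words over a finite alphabet X, the iterated integral functionals satisfy E_η[u](t,t₀) · E_ξ[u](t,t₀) = E_{η ⧢ ξ}[u](t,t₀) for all words η, ξ ∈ X*, all t₀ ≤ t, and all integrable u, where E is extended linearly to polynomials. -/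
open MeasureTheory

/-- The monomial series `1·w` over an alphabet `A`. -/
def mono {A : Type*} [DecidableEq A] (w : List A) : List A → ℝ :=
  fun ξ => if ξ = w then 1 else 0

/-- Coefficients of the shuffle product via the dual recursion
`⟨c ⧢ d, ∅⟩ = ⟨c,∅⟩⟨d,∅⟩`, `⟨c ⧢ d, aξ⟩ = ⟨(a⁻¹c) ⧢ d, ξ⟩ + ⟨c ⧢ (a⁻¹d), ξ⟩`;
this is the bilinear product with `(x_iη) ⧢ (x_jζ) = x_i(η ⧢ x_jζ) + x_j(x_iη ⧢ ζ)`
and `∅ ⧢ η = η ⧢ ∅ = η`. -/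
def shuffleCoeff {A : Type*} : List A → (List A → ℝ) → (List A → ℝ) → ℝ
  | [], c, d => c [] * d []
  | a :: ξ, c, d =>
      shuffleCoeff ξ (fun ζ => c (a :: ζ)) d + shuffleCoeff ξ c (fun ζ => d (a :: ζ))

/-- The shuffle product. -/
def shuffle {A : Type*} (c d : List A → ℝ) : List A → ℝ := fun ξ => shuffleCoeff ξ c d

/-- The iterated integral functionals: `E_∅[u] = 1` and
`E_{x_iη̄}[u](t,t₀) = ∫_{t₀}^t u_i(τ) E_{η̄}[u](τ,t₀) dτ`. -/
noncomputable def E {m : ℕ} (u : ℝ → Fin (m + 1) → ℝ) (t₀ : ℝ) :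
    List (Fin (m + 1)) → ℝ → ℝ
  | [] => fun _ => 1
  | i :: η => fun t => ∫ τ in t₀..t, u τ i * E u t₀ η τ


section aux
open Set intervalIntegral

lemma primitive_mul_primitive {f g : ℝ → ℝ} {a b : ℝ} (hab : a ≤ b)
    (hf : IntervalIntegrable f volume a b) (hg : IntervalIntegrable g volume a b) :
    (∫ s in a..b, f s) * (∫ s in a..b, g s)
      = (∫ s in a..b, f s * ∫ τ in a..s, g τ) + (∫ s in a..b, g s * ∫ τ in a..s, f τ) := by
  have hfI : IntegrableOn f (Ioc a b) volume :=
    (intervalIntegrable_iff_integrableOn_Ioc_of_le hab).1 hf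
  have hgI : IntegrableOn g (Ioc a b) volume :=
    (intervalIntegrable_iff_integrableOn_Ioc_of_le hab).1 hg
  have hGc : ContinuousOn (fun s => ∫ τ in a..s, g τ) (uIcc a b) :=
    continuousOn_primitive_interval' hg left_mem_uIcc
  have hFc : ContinuousOn (fun s => ∫ τ in a..s, f τ) (uIcc a b) :=
    continuousOn_primitive_interval' hf left_mem_uIcc
  have hfG : IntervalIntegrable (fun s => f s * ∫ τ in a..s, g τ) volume a b :=
    hf.mul_continuousOn hGc
  set μ := volume.restrict (Ioc a b) with hμ
  have hH : Integrable (Function.uncurry fun s τ => if s < τ then f s * g τ else 0)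
      (μ.prod μ) := by
    have hbase : Integrable (fun p : ℝ × ℝ => f p.1 * g p.2) (μ.prod μ) := hfI.mul_prod hgI
    have heq : (Function.uncurry fun s τ => if s < τ then f s * g τ else 0)
        = {p : ℝ × ℝ | p.1 < p.2}.indicator fun p => f p.1 * g p.2 := by
      funext p; by_cases h : p.1 < p.2 <;> simp [Function.uncurry, Set.indicator_apply, h]
    rw [heq]
    exact hbase.indicator (isOpen_lt continuous_fst continuous_snd).measurableSet
  have swap := integral_integral_swap hH
  have hL : (∫ s, (∫ τ, (if s < τ then f s * g τ else 0) ∂μ) ∂μ)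
      = ∫ s in Ioc a b, f s * (∫ τ in Ioc s b, g τ) := by
    rw [hμ]
    refine setIntegral_congr_fun measurableSet_Ioc fun s hs => ?_
    have h1 : (fun τ => if s < τ then f s * g τ else 0)
        = (Ioi s).indicator fun τ => f s * g τ := by
      funext τ; by_cases h : s < τ <;> simp [Set.indicator_apply, h]
    rw [h1, setIntegral_indicator measurableSet_Ioi]
    have h2 : Ioc a b ∩ Ioi s = Ioc s b := by
      ext x
      constructor
      · rintro ⟨⟨_, hx2⟩, hx3⟩; exact ⟨hx3, hx2⟩
      · rintro ⟨hx1, hx2⟩; exact ⟨⟨lt_trans hs.1 hx1, hx2⟩, hx1⟩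
    rw [h2, MeasureTheory.integral_const_mul]
  have hR : (∫ τ, (∫ s, (if s < τ then f s * g τ else 0) ∂μ) ∂μ)
      = ∫ τ in Ioc a b, g τ * (∫ s in a..τ, f s) := by
    rw [hμ]
    refine setIntegral_congr_fun measurableSet_Ioc fun τ hτ => ?_
    have h1 : (fun s => if s < τ then f s * g τ else 0)
        = (Iio τ).indicator fun s => f s * g τ := by
      funext s; by_cases h : s < τ <;> simp [Set.indicator_apply, h]
    rw [h1, setIntegral_indicator measurableSet_Iio]
    have h2 : Ioc a b ∩ Iio τ = Ioo a τ := by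
      ext x
      constructor
      · rintro ⟨⟨hx1, _⟩, hx3⟩; exact ⟨hx1, hx3⟩
      · rintro ⟨hx1, hx2⟩; exact ⟨⟨hx1, le_trans hx2.le hτ.2⟩, hx2⟩
    rw [h2, setIntegral_congr_set Ioo_ae_eq_Ioc, MeasureTheory.integral_mul_const, mul_comm]
    congr 1
    exact (intervalIntegral.integral_of_le hτ.1.le).symm
  have split : ∀ s ∈ Ioc a b,
      (∫ τ in Ioc s b, g τ) = (∫ τ in Ioc a b, g τ) - ∫ τ in a..s, g τ := by
    intro s hs
    have hunion : Ioc a s ∪ Ioc s b = Ioc a b := Ioc_union_Ioc_eq_Ioc hs.1.le hs.2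
    have h1 : IntegrableOn g (Ioc a s) volume := hgI.mono_set (Ioc_subset_Ioc_right hs.2)
    have h2 : IntegrableOn g (Ioc s b) volume := hgI.mono_set (Ioc_subset_Ioc_left hs.1.le)
    have hu := setIntegral_union (f := g) (μ := volume) (Ioc_disjoint_Ioc_of_le le_rfl)
      measurableSet_Ioc h1 h2
    rw [hunion] at hu
    rw [hu, intervalIntegral.integral_of_le hs.1.le]
    ring
  calc (∫ s in a..b, f s) * (∫ s in a..b, g s)
      = ∫ s in Ioc a b, f s * (∫ τ in Ioc a b, g τ) := by
        rw [intervalIntegral.integral_of_le hab, intervalIntegral.integral_of_le hab,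
          MeasureTheory.integral_mul_const]
    _ = ∫ s in Ioc a b, ((f s * ∫ τ in a..s, g τ)
          + f s * ((∫ τ in Ioc a b, g τ) - ∫ τ in a..s, g τ)) := by
        refine setIntegral_congr_fun measurableSet_Ioc fun s hs => ?_
        ring
    _ = (∫ s in Ioc a b, f s * ∫ τ in a..s, g τ)
          + ∫ s in Ioc a b, f s * ((∫ τ in Ioc a b, g τ) - ∫ τ in a..s, g τ) := by
        apply MeasureTheory.integral_add
        · exact (intervalIntegrable_iff_integrableOn_Ioc_of_le hab).1 hfG
        · exact (intervalIntegrable_iff_integrableOn_Ioc_of_le hab).1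
            (hf.mul_continuousOn (continuousOn_const.sub hGc))
    _ = (∫ s in Ioc a b, f s * ∫ τ in a..s, g τ) + ∫ τ in Ioc a b, g τ * (∫ s in a..τ, f s) := by
        congr 1
        have e1 : (∫ s in Ioc a b, f s * ((∫ τ in Ioc a b, g τ) - ∫ τ in a..s, g τ))
            = ∫ s in Ioc a b, f s * (∫ τ in Ioc s b, g τ) :=
          setIntegral_congr_fun measurableSet_Ioc fun s hs => by rw [split s hs]
        rw [e1, ← hL, swap, hR]
    _ = (∫ s in a..b, f s * ∫ τ in a..s, g τ) + ∫ s in a..b, g s * ∫ τ in a..s, f τ := by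
        rw [intervalIntegral.integral_of_le hab, intervalIntegral.integral_of_le hab]

end aux

lemma shuffleCoeff_zero_left {A : Type*} (w : List A) : ∀ d : List A → ℝ,
    shuffleCoeff w (fun _ => 0) d = 0 := by
  induction w with
  | nil => intro d; simp [shuffleCoeff]
  | cons a w ih => intro d; simp [shuffleCoeff, ih]

lemma shuffleCoeff_zero_right {A : Type*} (w : List A) : ∀ c : List A → ℝ,
    shuffleCoeff w c (fun _ => 0) = 0 := by
  induction w with
  | nil => intro c; simp [shuffleCoeff]
  | cons a w ih => intro c; simp [shuffleCoeff, ih]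

lemma mono_cons {A : Type*} [DecidableEq A] (a i : A) (η : List A) :
    (fun ζ => mono (i :: η) (a :: ζ)) = if a = i then mono η else fun _ => 0 := by
  by_cases h : a = i
  · subst h; funext ζ; simp [mono]
  · funext ζ; simp [mono, h]

lemma shuffle_cons {A : Type*} [DecidableEq A] (i j a : A) (η ξ ζ : List A) :
    shuffle (mono (i :: η)) (mono (j :: ξ)) (a :: ζ)
      = (if a = i then shuffle (mono η) (mono (j :: ξ)) ζ else 0)
        + (if a = j then shuffle (mono (i :: η)) (mono ξ) ζ else 0) := by
  show shuffleCoeff (a :: ζ) _ _ = _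
  rw [shuffleCoeff, mono_cons a i η, mono_cons a j ξ]
  congr 1
  · split
    · rfl
    · exact shuffleCoeff_zero_left ζ _
  · split
    · rfl
    · exact shuffleCoeff_zero_right ζ _

lemma shuffle_mono_nil_left {A : Type*} [DecidableEq A] (w : List A) : ∀ d : List A → ℝ,
    shuffle (mono []) d w = d w := by
  induction w with
  | nil => intro d; simp [shuffle, shuffleCoeff, mono]
  | cons a w ih =>
    intro d
    show shuffleCoeff (a :: w) _ _ = _
    rw [shuffleCoeff]
    have h1 : (fun ζ => mono ([] : List A) (a :: ζ)) = fun _ => 0 := by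
      funext ζ; simp [mono]
    rw [h1, shuffleCoeff_zero_left]
    simpa [shuffle] using ih (fun ζ => d (a :: ζ))

lemma shuffle_mono_nil_right {A : Type*} [DecidableEq A] (w : List A) : ∀ c : List A → ℝ,
    shuffle c (mono []) w = c w := by
  induction w with
  | nil => intro c; simp [shuffle, shuffleCoeff, mono]
  | cons a w ih =>
    intro c
    show shuffleCoeff (a :: w) _ _ = _
    rw [shuffleCoeff]
    have h1 : (fun ζ => mono ([] : List A) (a :: ζ)) = fun _ => 0 := by
      funext ζ; simp [mono]
    rw [h1, shuffleCoeff_zero_right]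
    simpa [shuffle] using ih (fun ζ => c (a :: ζ))

lemma sum_ofFn_congr {A : Type*} [Fintype A] {n n' : ℕ} (h : n = n') (φ : List A → ℝ) :
    ∑ f : Fin n → A, φ (List.ofFn f) = ∑ f : Fin n' → A, φ (List.ofFn f) := by
  subst h; rfl

lemma sum_mono_mul {A : Type*} [Fintype A] [DecidableEq A] {n : ℕ} (ξ : List A)
    (hn : ξ.length = n) (φ : List A → ℝ) :
    ∑ f : Fin n → A, mono ξ (List.ofFn f) * φ (List.ofFn f) = φ ξ := by
  subst hn
  rw [Finset.sum_eq_single (fun k => ξ.get k)]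
  · simp [mono, List.ofFn_get]
  · intro f _ hf
    have hne : List.ofFn f ≠ ξ := by
      intro h
      apply hf
      have h2 : List.ofFn f = List.ofFn (fun k => ξ.get k) := h.trans (List.ofFn_get ξ).symm
      exact List.ofFn_injective h2
    simp [mono, hne]
  · intro h; exact absurd (Finset.mem_univ _) h

lemma sum_ofFn_succ {A : Type*} [Fintype A] (n : ℕ) (φ : List A → ℝ) :
    ∑ f : Fin (n + 1) → A, φ (List.ofFn f)
      = ∑ a : A, ∑ g : Fin n → A, φ (a :: List.ofFn g) := by
  trans (∑ p : A × (Fin n → A), φ (p.1 :: List.ofFn p.2))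
  · exact Fintype.sum_equiv (Fin.consEquiv fun _ => A).symm _ _ (fun f => by
      rw [List.ofFn_succ]; rfl)
  · exact Fintype.sum_prod_type _

lemma E_nil {m : ℕ} (u : ℝ → Fin (m + 1) → ℝ) (t₀ t : ℝ) : E u t₀ [] t = 1 := rfl

lemma E_cons {m : ℕ} (u : ℝ → Fin (m + 1) → ℝ) (t₀ : ℝ) (i : Fin (m + 1))
    (w : List (Fin (m + 1))) (t : ℝ) :
    E u t₀ (i :: w) t = ∫ τ in t₀..t, u τ i * E u t₀ w τ := rfl

lemma E_props {m : ℕ} (u : ℝ → Fin (m + 1) → ℝ) (t₀ t₁ : ℝ)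
    (hint : ∀ i, IntervalIntegrable (fun τ => u τ i) volume t₀ t₁) :
    ∀ w : List (Fin (m + 1)), ContinuousOn (E u t₀ w) (Set.uIcc t₀ t₁)
      ∧ ∀ i, IntervalIntegrable (fun τ => u τ i * E u t₀ w τ) volume t₀ t₁ := by
  intro w
  induction w with
  | nil =>
    refine ⟨continuousOn_const, fun i => ?_⟩
    simpa [E_nil] using (hint i)
  | cons j w ih =>
    have hcont : ContinuousOn (E u t₀ (j :: w)) (Set.uIcc t₀ t₁) := by
      have := intervalIntegral.continuousOn_primitive_interval' (ih.2 j) Set.left_mem_uIcc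
      simpa [← E_cons] using this
    exact ⟨hcont, fun i => (hint i).mul_continuousOn hcont⟩

/-- For all words `η, ξ` over `X = {x₀,…,x_m}`, all `t₀ ≤ t ≤ t₁`, and all
integrable `u` (with `u₀ := 1`), the iterated integrals satisfy
`E_η[u](t,t₀) · E_ξ[u](t,t₀) = E_{η ⧢ ξ}[u](t,t₀)`, where `E` is extended
linearly to the shuffle polynomial `η ⧢ ξ` (a linear combination of words of
length `|η| + |ξ|`, identified with functions `Fin (|η|+|ξ|) → Fin (m+1)`). -/
theorem iterated_integral_shuffle {m : ℕ} (u : ℝ → Fin (m + 1) → ℝ) (t₀ t₁ : ℝ)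
    (h0 : ∀ t, u t 0 = 1)
    (hint : ∀ i, IntervalIntegrable (fun τ => u τ i) volume t₀ t₁) :
    ∀ (η ξ : List (Fin (m + 1))) (t : ℝ), t₀ ≤ t → t ≤ t₁ →
      E u t₀ η t * E u t₀ ξ t =
        ∑ f : Fin (η.length + ξ.length) → Fin (m + 1),
          shuffle (mono η) (mono ξ) (List.ofFn f) * E u t₀ (List.ofFn f) t := by
  intro η
  induction η with
  | nil =>
    intro ξ t ht0 ht1
    simp only [shuffle_mono_nil_left]
    rw [sum_mono_mul (n := List.length ([] : List (Fin (m+1))) + ξ.length) ξ (by simp)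
      (fun w => E u t₀ w t), E_nil, one_mul]
  | cons i η' ihη =>
    intro ξ
    induction ξ with
    | nil =>
      intro t ht0 ht1
      simp only [shuffle_mono_nil_right]
      rw [sum_mono_mul (n := (i :: η').length + List.length ([] : List (Fin (m+1))))
        (i :: η') (by simp) (fun w => E u t₀ w t), E_nil, mul_one]
    | cons j ξ' ihξ =>
      intro t ht0 ht1
      have hle : t₀ ≤ t₁ := ht0.trans ht1
      have hsub : Set.uIcc t₀ t ⊆ Set.uIcc t₀ t₁ :=
        Set.uIcc_subset_uIcc Set.left_mem_uIcc
          (by rw [Set.uIcc_of_le hle]; exact ⟨ht0, ht1⟩)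
      have hIw : ∀ (w : List (Fin (m+1))) (a : Fin (m+1)),
          IntervalIntegrable (fun τ => u τ a * E u t₀ w τ) volume t₀ t :=
        fun w a => ((E_props u t₀ t₁ hint w).2 a).mono_set hsub
      have key := primitive_mul_primitive (f := fun s => u s i * E u t₀ η' s)
        (g := fun s => u s j * E u t₀ ξ' s) ht0 (hIw η' i) (hIw ξ' j)
      have e₁ : (∫ s in t₀..t, (u s i * E u t₀ η' s) * ∫ τ in t₀..s, u τ j * E u t₀ ξ' τ)
          = ∑ g : Fin ((i :: η').length + ξ'.length) → Fin (m+1),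
              shuffle (mono η') (mono (j :: ξ')) (List.ofFn g)
                * E u t₀ (i :: List.ofFn g) t := by
        have heq : Set.EqOn
            (fun s => (u s i * E u t₀ η' s) * ∫ τ in t₀..s, u τ j * E u t₀ ξ' τ)
            (fun s => ∑ g : Fin (η'.length + (j :: ξ').length) → Fin (m+1),
              shuffle (mono η') (mono (j :: ξ')) (List.ofFn g)
                * (u s i * E u t₀ (List.ofFn g) s)) (Set.uIcc t₀ t) := by
          intro s hs
          rw [Set.uIcc_of_le ht0] at hs
          have hrec := ihη (j :: ξ') s hs.1 (hs.2.trans ht1)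
          calc (u s i * E u t₀ η' s) * ∫ τ in t₀..s, u τ j * E u t₀ ξ' τ
              = u s i * (E u t₀ η' s * E u t₀ (j :: ξ') s) := by
                rw [E_cons]; ring
            _ = u s i * ∑ g : Fin (η'.length + (j :: ξ').length) → Fin (m+1),
                  shuffle (mono η') (mono (j :: ξ')) (List.ofFn g)
                    * E u t₀ (List.ofFn g) s := by rw [hrec]
            _ = ∑ g : Fin (η'.length + (j :: ξ').length) → Fin (m+1),
                  shuffle (mono η') (mono (j :: ξ')) (List.ofFn g)
                    * (u s i * E u t₀ (List.ofFn g) s) := by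
                rw [Finset.mul_sum]
                exact Finset.sum_congr rfl fun g _ => by ring
        calc (∫ s in t₀..t, (u s i * E u t₀ η' s) * ∫ τ in t₀..s, u τ j * E u t₀ ξ' τ)
            = ∫ s in t₀..t, ∑ g : Fin (η'.length + (j :: ξ').length) → Fin (m+1),
                shuffle (mono η') (mono (j :: ξ')) (List.ofFn g)
                  * (u s i * E u t₀ (List.ofFn g) s) :=
              intervalIntegral.integral_congr heq
          _ = ∑ g : Fin (η'.length + (j :: ξ').length) → Fin (m+1),
                ∫ s in t₀..t, shuffle (mono η') (mono (j :: ξ')) (List.ofFn g)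
                  * (u s i * E u t₀ (List.ofFn g) s) := by
              apply intervalIntegral.integral_finset_sum
              intro g _
              exact (hIw (List.ofFn g) i).const_mul _
          _ = ∑ g : Fin (η'.length + (j :: ξ').length) → Fin (m+1),
                shuffle (mono η') (mono (j :: ξ')) (List.ofFn g)
                  * E u t₀ (i :: List.ofFn g) t := by
              refine Finset.sum_congr rfl fun g _ => ?_
              rw [intervalIntegral.integral_const_mul, E_cons]
          _ = ∑ g : Fin ((i :: η').length + ξ'.length) → Fin (m+1),
                shuffle (mono η') (mono (j :: ξ')) (List.ofFn g)
                  * E u t₀ (i :: List.ofFn g) t :=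
              sum_ofFn_congr (by simp only [List.length_cons]; omega)
                (fun w => shuffle (mono η') (mono (j :: ξ')) w * E u t₀ (i :: w) t)
      have e₂ : (∫ s in t₀..t, (u s j * E u t₀ ξ' s) * ∫ τ in t₀..s, u τ i * E u t₀ η' τ)
          = ∑ g : Fin ((i :: η').length + ξ'.length) → Fin (m+1),
              shuffle (mono (i :: η')) (mono ξ') (List.ofFn g)
                * E u t₀ (j :: List.ofFn g) t := by
        have heq : Set.EqOn
            (fun s => (u s j * E u t₀ ξ' s) * ∫ τ in t₀..s, u τ i * E u t₀ η' τ)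
            (fun s => ∑ g : Fin ((i :: η').length + ξ'.length) → Fin (m+1),
              shuffle (mono (i :: η')) (mono ξ') (List.ofFn g)
                * (u s j * E u t₀ (List.ofFn g) s)) (Set.uIcc t₀ t) := by
          intro s hs
          rw [Set.uIcc_of_le ht0] at hs
          have hrec := ihξ s hs.1 (hs.2.trans ht1)
          calc (u s j * E u t₀ ξ' s) * ∫ τ in t₀..s, u τ i * E u t₀ η' τ
              = u s j * (E u t₀ (i :: η') s * E u t₀ ξ' s) := by
                rw [E_cons]; ring
            _ = u s j * ∑ g : Fin ((i :: η').length + ξ'.length) → Fin (m+1),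
                  shuffle (mono (i :: η')) (mono ξ') (List.ofFn g)
                    * E u t₀ (List.ofFn g) s := by rw [hrec]
            _ = ∑ g : Fin ((i :: η').length + ξ'.length) → Fin (m+1),
                  shuffle (mono (i :: η')) (mono ξ') (List.ofFn g)
                    * (u s j * E u t₀ (List.ofFn g) s) := by
                rw [Finset.mul_sum]
                exact Finset.sum_congr rfl fun g _ => by ring
        calc (∫ s in t₀..t, (u s j * E u t₀ ξ' s) * ∫ τ in t₀..s, u τ i * E u t₀ η' τ)
            = ∫ s in t₀..t, ∑ g : Fin ((i :: η').length + ξ'.length) → Fin (m+1),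
                shuffle (mono (i :: η')) (mono ξ') (List.ofFn g)
                  * (u s j * E u t₀ (List.ofFn g) s) :=
              intervalIntegral.integral_congr heq
          _ = ∑ g : Fin ((i :: η').length + ξ'.length) → Fin (m+1),
                ∫ s in t₀..t, shuffle (mono (i :: η')) (mono ξ') (List.ofFn g)
                  * (u s j * E u t₀ (List.ofFn g) s) := by
              apply intervalIntegral.integral_finset_sum
              intro g _
              exact (hIw (List.ofFn g) j).const_mul _
          _ = ∑ g : Fin ((i :: η').length + ξ'.length) → Fin (m+1),
                shuffle (mono (i :: η')) (mono ξ') (List.ofFn g)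
                  * E u t₀ (j :: List.ofFn g) t := by
              refine Finset.sum_congr rfl fun g _ => ?_
              rw [intervalIntegral.integral_const_mul, E_cons]
      have eR : (∑ f : Fin ((i :: η').length + (j :: ξ').length) → Fin (m+1),
            shuffle (mono (i :: η')) (mono (j :: ξ')) (List.ofFn f)
              * E u t₀ (List.ofFn f) t)
          = (∑ g : Fin ((i :: η').length + ξ'.length) → Fin (m+1),
              shuffle (mono η') (mono (j :: ξ')) (List.ofFn g)
                * E u t₀ (i :: List.ofFn g) t)
            + (∑ g : Fin ((i :: η').length + ξ'.length) → Fin (m+1),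
              shuffle (mono (i :: η')) (mono ξ') (List.ofFn g)
                * E u t₀ (j :: List.ofFn g) t) := by
        calc (∑ f : Fin ((i :: η').length + (j :: ξ').length) → Fin (m+1),
              shuffle (mono (i :: η')) (mono (j :: ξ')) (List.ofFn f)
                * E u t₀ (List.ofFn f) t)
            = ∑ f : Fin (((i :: η').length + ξ'.length) + 1) → Fin (m+1),
                shuffle (mono (i :: η')) (mono (j :: ξ')) (List.ofFn f)
                  * E u t₀ (List.ofFn f) t :=
              sum_ofFn_congr (by simp only [List.length_cons]; omega)
                (fun w => shuffle (mono (i :: η')) (mono (j :: ξ')) w * E u t₀ w t)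
          _ = ∑ a : Fin (m+1), ∑ g : Fin ((i :: η').length + ξ'.length) → Fin (m+1),
                shuffle (mono (i :: η')) (mono (j :: ξ')) (a :: List.ofFn g)
                  * E u t₀ (a :: List.ofFn g) t :=
              sum_ofFn_succ _
                (fun w => shuffle (mono (i :: η')) (mono (j :: ξ')) w * E u t₀ w t)
          _ = ∑ a : Fin (m+1), ∑ g : Fin ((i :: η').length + ξ'.length) → Fin (m+1),
                ((if a = i then shuffle (mono η') (mono (j :: ξ')) (List.ofFn g)
                    * E u t₀ (a :: List.ofFn g) t else 0)
                 + (if a = j then shuffle (mono (i :: η')) (mono ξ') (List.ofFn g)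
                    * E u t₀ (a :: List.ofFn g) t else 0)) := by
              refine Finset.sum_congr rfl fun a _ => Finset.sum_congr rfl fun g _ => ?_
              rw [shuffle_cons]; split_ifs <;> ring
          _ = (∑ a : Fin (m+1), ∑ g : Fin ((i :: η').length + ξ'.length) → Fin (m+1),
                if a = i then shuffle (mono η') (mono (j :: ξ')) (List.ofFn g)
                  * E u t₀ (a :: List.ofFn g) t else 0)
              + (∑ a : Fin (m+1), ∑ g : Fin ((i :: η').length + ξ'.length) → Fin (m+1),
                if a = j then shuffle (mono (i :: η')) (mono ξ') (List.ofFn g)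
                  * E u t₀ (a :: List.ofFn g) t else 0) := by
              simp only [Finset.sum_add_distrib]
          _ = (∑ g : Fin ((i :: η').length + ξ'.length) → Fin (m+1),
                shuffle (mono η') (mono (j :: ξ')) (List.ofFn g)
                  * E u t₀ (i :: List.ofFn g) t)
              + (∑ g : Fin ((i :: η').length + ξ'.length) → Fin (m+1),
                shuffle (mono (i :: η')) (mono ξ') (List.ofFn g)
                  * E u t₀ (j :: List.ofFn g) t) := by
              congr 1
              · rw [Finset.sum_congr rfl fun a _ => Finset.sum_ite_irrel ..]
                simp [Finset.sum_ite_eq']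
              · rw [Finset.sum_congr rfl fun a _ => Finset.sum_ite_irrel ..]
                simp [Finset.sum_ite_eq']
      rw [E_cons u t₀ i η' t, E_cons u t₀ j ξ' t, key, e₁, e₂, eR]
end
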